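/- Along any solution of the zeroth-order fast (layer) system without permanent charge, φ₀' = u₀, u₀' = −z₁c₁₀ − z₂c₂₀, c₁₀' = −z₁c₁₀u₀, c₂₀' = −z₂c₂₀u₀ (where z₁, z₂ are real constants and φ₀, u₀, c₁₀, c₂₀ : ℝ → ℝ are differentiable), the three quantities e^{z₁φ₀}·c₁₀, e^{z₂φ₀}·c₂₀, and c₁₀ + c₂₀ − u₀²/2 are constant in the independent variable ξ. -/

import Mathlib

lemma const_of_hasDerivAt_zero {f : ℝ → ℝ} (h : ∀ x, HasDerivAt f 0 x) (ξ : ℝ) :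
    f ξ = f 0 :=
  is_const_of_deriv_eq_zero (fun x => (h x).differentiableAt) (fun x => (h x).deriv) ξ 0

/-- Lemma 2.1 (zeroth order): first integrals of the zeroth-order layer system
without permanent charge. -/
theorem first_integrals_zeroth_order_no_charge
    (z₁ z₂ : ℝ) (φ₀ u₀ c₁₀ c₂₀ : ℝ → ℝ)
    (hφ : ∀ ξ, HasDerivAt φ₀ (u₀ ξ) ξ)
    (hu : ∀ ξ, HasDerivAt u₀ (-z₁ * c₁₀ ξ - z₂ * c₂₀ ξ) ξ)
    (hc₁ : ∀ ξ, HasDerivAt c₁₀ (-z₁ * c₁₀ ξ * u₀ ξ) ξ)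
    (hc₂ : ∀ ξ, HasDerivAt c₂₀ (-z₂ * c₂₀ ξ * u₀ ξ) ξ) :
    (∀ ξ, Real.exp (z₁ * φ₀ ξ) * c₁₀ ξ = Real.exp (z₁ * φ₀ 0) * c₁₀ 0) ∧
    (∀ ξ, Real.exp (z₂ * φ₀ ξ) * c₂₀ ξ = Real.exp (z₂ * φ₀ 0) * c₂₀ 0) ∧
    (∀ ξ, c₁₀ ξ + c₂₀ ξ - u₀ ξ ^ 2 / 2 = c₁₀ 0 + c₂₀ 0 - u₀ 0 ^ 2 / 2) := by
  refine ⟨?_, ?_, ?_⟩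
  · refine const_of_hasDerivAt_zero (f := fun ξ => Real.exp (z₁ * φ₀ ξ) * c₁₀ ξ) (fun x => ?_)
    have h1 := (((hφ x).const_mul z₁).exp).mul (hc₁ x)
    exact h1.congr_deriv (by ring)
  · refine const_of_hasDerivAt_zero (f := fun ξ => Real.exp (z₂ * φ₀ ξ) * c₂₀ ξ) (fun x => ?_)
    have h1 := (((hφ x).const_mul z₂).exp).mul (hc₂ x)
    exact h1.congr_deriv (by ring)
  · refine const_of_hasDerivAt_zero
      (f := fun ξ => c₁₀ ξ + c₂₀ ξ - u₀ ξ ^ 2 / 2) (fun x => ?_)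
    have h1 := ((hc₁ x).add (hc₂ x)).sub (((hu x).pow 2).div_const 2)
    exact h1.congr_deriv (by ring)
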